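/- Let f, g : ℤ → ℂ be sequences (Fourier coefficients) with f ∈ ℓ² and ⟨·⟩^{1/2+a} g ∈ ℓ² for some a > 1/2. Define the convolution h(m) = Σ_{k+l=m} (⟨k+l⟩^{1/2} − ⟨k⟩^{1/2}) f(k) g(l). Then Σ_m |h(m)|² ≤ C · (Σ_k |f(k)|²) · (Σ_l ⟨l⟩^{1+2a} |g(l)|²) for a constant C depending only on a. -/

import Mathlib

open scoped BigOperators

private lemma sqrt_sub_sqrt_le (u v : ℝ) (hu : 0 ≤ u) (hv : 0 ≤ v) :
    |Real.sqrt u - Real.sqrt v| ≤ Real.sqrt |u - v| := by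
  rcases le_total v u with h | h
  · rw [abs_of_nonneg (by linarith [Real.sqrt_le_sqrt h] : (0:ℝ) ≤ Real.sqrt u - Real.sqrt v),
      abs_of_nonneg (by linarith)]
    have h1 := Real.sq_sqrt hu
    have h2 := Real.sq_sqrt hv
    have h3 := Real.sq_sqrt (by linarith : (0:ℝ) ≤ u - v)
    nlinarith [Real.sqrt_nonneg u, Real.sqrt_nonneg v, Real.sqrt_nonneg (u-v),
      mul_nonneg (Real.sqrt_nonneg v) (Real.sqrt_nonneg (u-v))]
  · rw [abs_of_nonpos (by linarith [Real.sqrt_le_sqrt h] : Real.sqrt u - Real.sqrt v ≤ 0),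
      abs_of_nonpos (by linarith), neg_sub, neg_sub]
    have h1 := Real.sq_sqrt hu
    have h2 := Real.sq_sqrt hv
    have h3 := Real.sq_sqrt (by linarith : (0:ℝ) ≤ v - u)
    nlinarith [Real.sqrt_nonneg u, Real.sqrt_nonneg v, Real.sqrt_nonneg (v-u),
      mul_nonneg (Real.sqrt_nonneg u) (Real.sqrt_nonneg (v-u))]

private lemma bracket_lipschitz (x y : ℝ) :
    |Real.sqrt (1+x^2) - Real.sqrt (1+y^2)| ≤ |x - y| := by
  have hm := Real.sq_sqrt (by positivity : (0:ℝ) ≤ 1+x^2)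
  have hk := Real.sq_sqrt (by positivity : (0:ℝ) ≤ 1+y^2)
  have hxm : |x| ≤ Real.sqrt (1+x^2) := by
    rw [← Real.sqrt_sq_eq_abs]; exact Real.sqrt_le_sqrt (by nlinarith)
  have hyk : |y| ≤ Real.sqrt (1+y^2) := by
    rw [← Real.sqrt_sq_eq_abs]; exact Real.sqrt_le_sqrt (by nlinarith)
  have h1 : (x-y)*(x+y) ≤ |x-y| * (|x|+|y|) := by
    calc (x-y)*(x+y) ≤ |(x-y)*(x+y)| := le_abs_self _
    _ = |x-y| * |x+y| := abs_mul _ _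
    _ ≤ |x-y| * (|x|+|y|) := mul_le_mul_of_nonneg_left (abs_add_le x y) (abs_nonneg _)
  have h2 : (y-x)*(y+x) ≤ |x-y| * (|x|+|y|) := by
    calc (y-x)*(y+x) ≤ |(y-x)*(y+x)| := le_abs_self _
    _ = |x-y| * |y+x| := by rw [abs_mul, abs_sub_comm]
    _ ≤ |x-y| * (|x|+|y|) := by
        rw [add_comm y x]; exact mul_le_mul_of_nonneg_left (abs_add_le x y) (abs_nonneg _)
  rw [abs_sub_le_iff]
  constructor
  · nlinarith [Real.sqrt_nonneg (1+x^2), Real.sqrt_nonneg (1+y^2), abs_nonneg x, abs_nonneg y,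
      abs_nonneg (x-y)]
  · nlinarith [Real.sqrt_nonneg (1+x^2), Real.sqrt_nonneg (1+y^2), abs_nonneg x, abs_nonneg y,
      abs_nonneg (x-y)]

/-- The symbol bound: `|⟨x⟩^{1/2} - ⟨y⟩^{1/2}| ≤ ⟨x-y⟩^{1/2}`. -/
private lemma symbol_bound (x y : ℝ) :
    |((1+x^2) ^ ((1:ℝ)/2)) ^ ((1:ℝ)/2) - ((1+y^2) ^ ((1:ℝ)/2)) ^ ((1:ℝ)/2)|
      ≤ Real.sqrt (Real.sqrt (1+(x-y)^2)) := by
  rw [← Real.sqrt_eq_rpow, ← Real.sqrt_eq_rpow, ← Real.sqrt_eq_rpow, ← Real.sqrt_eq_rpow]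
  calc |Real.sqrt (Real.sqrt (1+x^2)) - Real.sqrt (Real.sqrt (1+y^2))|
      ≤ Real.sqrt |Real.sqrt (1+x^2) - Real.sqrt (1+y^2)| :=
        sqrt_sub_sqrt_le _ _ (Real.sqrt_nonneg _) (Real.sqrt_nonneg _)
    _ ≤ Real.sqrt |x - y| := Real.sqrt_le_sqrt (bracket_lipschitz x y)
    _ ≤ Real.sqrt (Real.sqrt (1+(x-y)^2)) := by
        apply Real.sqrt_le_sqrt
        rw [← Real.sqrt_sq_eq_abs]
        exact Real.sqrt_le_sqrt (by nlinarith)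

private lemma my_cs {u v : ℤ → ℝ} (huv : Summable (fun i => u i * v i))
    (hU : Summable (fun i => u i^2)) (hV : Summable (fun i => v i^2)) :
    ∑' i, u i * v i ≤ Real.sqrt (∑' i, u i^2) * Real.sqrt (∑' i, v i^2) := by
  apply Summable.tsum_le_of_sum_le huv
  intro s
  refine (Real.sum_mul_le_sqrt_mul_sqrt s u v).trans ?_
  exact mul_le_mul (Real.sqrt_le_sqrt (Summable.sum_le_tsum s (fun i _ => by positivity) hU))
    (Real.sqrt_le_sqrt (Summable.sum_le_tsum s (fun i _ => by positivity) hV))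
    (Real.sqrt_nonneg _) (Real.sqrt_nonneg _)

private lemma my_S {a : ℝ} (ha : 1/2 < a) : Summable (fun l : ℤ => (1 + (l:ℝ)^2) ^ (-a)) := by
  have h : Summable (fun n : ℤ => 1 / |(n:ℝ) + 0| ^ (2*a)) :=
    (Real.summable_one_div_int_add_rpow 0 (2*a)).mpr (by linarith)
  apply h.of_norm_bounded_eventually
  rw [Filter.eventually_cofinite]
  apply Set.Finite.subset (Set.finite_singleton (0:ℤ))
  intro l hl
  simp only [Set.mem_setOf_eq, not_le] at hl
  by_contra hl0
  simp only [Set.mem_singleton_iff] at hl0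
  have hl' : (1:ℝ) ≤ |(l:ℝ)| := by
    rw [← Int.cast_abs]; exact_mod_cast Int.one_le_abs hl0
  have key : ((l:ℝ)^2) ^ a = |(l:ℝ)| ^ (2*a) := by
    rw [← sq_abs, ← Real.rpow_natCast |(l:ℝ)| 2, ← Real.rpow_mul (abs_nonneg _)]
    norm_num [mul_comm]
  have h2 : |(l:ℝ)| ^ (2*a) ≤ (1 + (l:ℝ)^2) ^ a := by
    rw [← key]
    exact Real.rpow_le_rpow (by positivity) (by linarith) (by linarith)
  have hb : ‖(1 + (l:ℝ)^2) ^ (-a)‖ ≤ 1 / |(l:ℝ) + 0| ^ (2*a) := by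
    rw [Real.norm_eq_abs, abs_of_nonneg (by positivity), add_zero, one_div,
      Real.rpow_neg (by positivity)]
    exact inv_anti₀ (by positivity) h2
  linarith [hl.trans_le hb]

private lemma rpow_sq {x : ℝ} (hx : 0 ≤ x) (p : ℝ) : (x ^ p) ^ 2 = x ^ (2*p) := by
  rw [← Real.rpow_natCast (x ^ p) 2, ← Real.rpow_mul hx]
  norm_num [mul_comm]

set_option maxHeartbeats 1000000 in
/-- Commutator estimate at the level of Fourier coefficients:
for `a > 1/2`, with `h m = ∑_{k+l=m} (⟨k+l⟩^{1/2} − ⟨k⟩^{1/2}) f k g l`,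
one has `∑ |h m|² ≤ C (∑ |f k|²) (∑ ⟨l⟩^{1+2a} |g l|²)`. -/
theorem commutator_half_bracket_estimate (a : ℝ) (ha : 1 / 2 < a) :
    ∃ C : ℝ, 0 < C ∧ ∀ f g : ℤ → ℂ,
      Summable (fun k : ℤ => ‖f k‖ ^ 2) →
      Summable (fun l : ℤ => ((1 + (l : ℝ) ^ 2) ^ ((1 + 2 * a) / 2)) * ‖g l‖ ^ 2) →
      ∑' m : ℤ, ‖∑' k : ℤ,
          ((((1 + (m : ℝ) ^ 2) ^ ((1 : ℝ) / 2)) ^ ((1 : ℝ) / 2)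
            - ((1 + (k : ℝ) ^ 2) ^ ((1 : ℝ) / 2)) ^ ((1 : ℝ) / 2) : ℝ) : ℂ)
            * f k * g (m - k)‖ ^ 2
        ≤ C * (∑' k : ℤ, ‖f k‖ ^ 2)
            * (∑' l : ℤ, ((1 + (l : ℝ) ^ 2) ^ ((1 + 2 * a) / 2)) * ‖g l‖ ^ 2) := by
  have hS : Summable (fun l : ℤ => (1 + (l:ℝ)^2) ^ (-a)) := my_S ha
  set S : ℝ := ∑' l : ℤ, (1 + (l:ℝ)^2) ^ (-a) with hSdef
  have hSpos : 0 < S := Summable.tsum_pos hS (fun l => by positivity) 0 (by positivity)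
  have hSnn : 0 ≤ S := hSpos.le
  refine ⟨S, hSpos, ?_⟩
  intro f g hf hg
  -- notation
  set V : ℤ → ℝ := fun l => ((1 + (l : ℝ) ^ 2) ^ ((1 + 2 * a) / 2)) * ‖g l‖ ^ 2 with hVdef
  have hVnn : ∀ l, 0 ≤ V l := fun l => by positivity
  set W : ℤ → ℝ := fun l => Real.sqrt (Real.sqrt (1 + (l:ℝ)^2)) * ‖g l‖ with hWdef
  have hWnn : ∀ l, 0 ≤ W l := fun l => by positivity
  have hW2V : ∀ l, W l ^ 2 ≤ V l := by
    intro l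
    have h1 : W l ^ 2 = Real.sqrt (1 + (l:ℝ)^2) * ‖g l‖^2 := by
      rw [hWdef, mul_pow, Real.sq_sqrt (Real.sqrt_nonneg _)]
    rw [h1, hVdef]
    apply mul_le_mul_of_nonneg_right _ (by positivity)
    rw [Real.sqrt_eq_rpow]
    exact Real.rpow_le_rpow_of_exponent_le (by nlinarith [sq_nonneg ((l:ℝ))]) (by linarith)
  have hW2 : Summable (fun l => W l ^ 2) := hg.of_nonneg_of_le (fun l => by positivity) hW2V
  -- product summability and Fubini
  have hprod : Summable (fun z : ℤ × ℤ => ‖f z.1‖^2 * V z.2) :=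
    hf.mul_of_nonneg hg (fun k => by positivity) hVnn
  let e : ℤ × ℤ ≃ ℤ × ℤ :=
    { toFun := fun p => (p.2, p.1 - p.2)
      invFun := fun z => (z.1 + z.2, z.1)
      left_inv := fun p => by simp
      right_inv := fun z => by simp }
  have hprod2 : Summable (fun p : ℤ × ℤ => ‖f p.2‖^2 * V (p.1 - p.2)) :=
    e.summable_iff.mpr hprod
  set T : ℤ → ℝ := fun m => ∑' k : ℤ, ‖f k‖^2 * V (m - k) with hTdef
  have hTm : ∀ m, Summable (fun k : ℤ => ‖f k‖^2 * V (m - k)) := fun m => hprod2.prod_factor m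
  have hTnn : ∀ m, 0 ≤ T m := fun m => tsum_nonneg (fun k => by positivity)
  have hT : Summable T := hprod2.prod
  have hTtot : ∑' m, T m = (∑' k : ℤ, ‖f k‖^2) * (∑' l : ℤ, V l) := by
    rw [Summable.tsum_mul_tsum hf hg hprod, ← e.tsum_eq (fun z : ℤ × ℤ => ‖f z.1‖^2 * V z.2)]
    rw [hTdef]
    exact (Summable.tsum_prod hprod2).symm
  -- per-m estimate
  have key : ∀ m : ℤ, ‖∑' k : ℤ,
      ((((1 + (m : ℝ) ^ 2) ^ ((1 : ℝ) / 2)) ^ ((1 : ℝ) / 2)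
        - ((1 + (k : ℝ) ^ 2) ^ ((1 : ℝ) / 2)) ^ ((1 : ℝ) / 2) : ℝ) : ℂ)
        * f k * g (m - k)‖ ^ 2 ≤ S * T m := by
    intro m
    set t : ℤ → ℂ := fun k =>
      ((((1 + (m : ℝ) ^ 2) ^ ((1 : ℝ) / 2)) ^ ((1 : ℝ) / 2)
        - ((1 + (k : ℝ) ^ 2) ^ ((1 : ℝ) / 2)) ^ ((1 : ℝ) / 2) : ℝ) : ℂ)
        * f k * g (m - k) with htdef
    have hnorm : ∀ k : ℤ, ‖t k‖ ≤ ‖f k‖ * W (m - k) := by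
      intro k
      rw [htdef]
      simp only [norm_mul, Complex.norm_real]
      have hsym := symbol_bound (m:ℝ) (k:ℝ)
      have hcast : ((m - k : ℤ) : ℝ) = (m:ℝ) - (k:ℝ) := by push_cast; ring
      rw [hWdef]
      calc |(((1 + (m : ℝ) ^ 2) ^ ((1 : ℝ) / 2)) ^ ((1 : ℝ) / 2)
            - ((1 + (k : ℝ) ^ 2) ^ ((1 : ℝ) / 2)) ^ ((1 : ℝ) / 2) : ℝ)| * ‖f k‖ * ‖g (m - k)‖
          ≤ Real.sqrt (Real.sqrt (1 + ((m:ℝ) - (k:ℝ))^2)) * ‖f k‖ * ‖g (m - k)‖ := by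
            gcongr
        _ = ‖f k‖ * (Real.sqrt (Real.sqrt (1 + (((m - k : ℤ)):ℝ)^2)) * ‖g (m - k)‖) := by
            rw [hcast]; ring
    -- weighted Cauchy-Schwarz setup
    set u : ℤ → ℝ := fun k => (1 + (((m - k : ℤ)):ℝ)^2) ^ (-(a/2)) with hudef
    set v : ℤ → ℝ := fun k => (1 + (((m - k : ℤ)):ℝ)^2) ^ (a/2) * (‖f k‖ * W (m - k))
      with hvdef
    have hdpos : ∀ k : ℤ, (0:ℝ) < 1 + (((m - k : ℤ)):ℝ)^2 := fun k => by positivity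
    have huv : ∀ k, u k * v k = ‖f k‖ * W (m - k) := by
      intro k
      rw [hudef, hvdef, ← mul_assoc, ← Real.rpow_add (hdpos k)]
      norm_num
    have hu2 : ∀ k, u k ^ 2 = (1 + (((m - k : ℤ)):ℝ)^2) ^ (-a) := by
      intro k
      rw [hudef, rpow_sq (hdpos k).le]
      congr 1
      ring
    have hW2eq : ∀ k : ℤ, W (m - k) ^ 2 = (1 + (((m - k : ℤ)):ℝ)^2) ^ ((1:ℝ)/2) * ‖g (m - k)‖^2 := by
      intro k
      rw [hWdef, mul_pow, Real.sq_sqrt (Real.sqrt_nonneg _), Real.sqrt_eq_rpow]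
    have hd : ∀ k : ℤ, (1 + (((m - k : ℤ)):ℝ)^2) ^ (2*(a/2)) * (1 + (((m - k : ℤ)):ℝ)^2) ^ ((1:ℝ)/2)
        = (1 + (((m - k : ℤ)):ℝ)^2) ^ ((1+2*a)/2) := by
      intro k
      rw [← Real.rpow_add (hdpos k)]
      congr 1
      ring
    have hv2 : ∀ k, v k ^ 2 = ‖f k‖^2 * V (m - k) := by
      intro k
      calc v k ^ 2 = (1 + (((m - k : ℤ)):ℝ)^2) ^ (2*(a/2)) * (‖f k‖^2 * W (m - k)^2) := by
            rw [hvdef, mul_pow, rpow_sq (hdpos k).le, mul_pow]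
        _ = ‖f k‖^2 * V (m - k) := by rw [hW2eq k]; simp only [hVdef]; rw [← hd k]; ring
    have hu2sum : Summable (fun k => u k ^ 2) := by
      simp only [hu2]
      exact (Equiv.subLeft m).summable_iff.mpr hS
    have hv2sum : Summable (fun k => v k ^ 2) := by
      simp only [hv2]; exact hTm m
    have hWm2 : Summable (fun k => W (m - k) ^ 2) := (Equiv.subLeft m).summable_iff.mpr hW2
    have hFW : Summable (fun k => ‖f k‖ * W (m - k)) := by
      apply Summable.of_nonneg_of_le (fun k => by positivity)
        (fun k => _) ((hf.add hWm2).div_const 2)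
      intro k
      nlinarith [sq_nonneg (‖f k‖ - W (m - k))]
    have hts : Summable (fun k => ‖t k‖) :=
      Summable.of_nonneg_of_le (fun k => norm_nonneg _) hnorm hFW
    have huvsum : Summable (fun k => u k * v k) := by simp only [huv]; exact hFW
    have hSu : ∑' k, u k ^ 2 = S := by
      simp only [hu2, hSdef]
      exact (Equiv.subLeft m).tsum_eq (fun l : ℤ => (1 + (l:ℝ)^2) ^ (-a))
    have hTv : ∑' k, v k ^ 2 = T m := by simp only [hv2]; rfl
    have h1 : ‖∑' k, t k‖ ≤ Real.sqrt S * Real.sqrt (T m) := by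
      calc ‖∑' k, t k‖ ≤ ∑' k, ‖t k‖ := norm_tsum_le_tsum_norm hts
        _ ≤ ∑' k, ‖f k‖ * W (m - k) := Summable.tsum_le_tsum hnorm hts hFW
        _ = ∑' k, u k * v k := by simp only [huv]
        _ ≤ Real.sqrt (∑' k, u k ^ 2) * Real.sqrt (∑' k, v k ^ 2) :=
            my_cs huvsum hu2sum hv2sum
        _ = Real.sqrt S * Real.sqrt (T m) := by rw [hSu, hTv]
    calc ‖∑' k, t k‖^2 ≤ (Real.sqrt S * Real.sqrt (T m))^2 :=
          pow_le_pow_left₀ (norm_nonneg _) h1 2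
      _ = S * T m := by
          rw [mul_pow, Real.sq_sqrt hSnn, Real.sq_sqrt (hTnn m)]
  -- sum over m
  have hLHS : Summable (fun m : ℤ => ‖∑' k : ℤ,
      ((((1 + (m : ℝ) ^ 2) ^ ((1 : ℝ) / 2)) ^ ((1 : ℝ) / 2)
        - ((1 + (k : ℝ) ^ 2) ^ ((1 : ℝ) / 2)) ^ ((1 : ℝ) / 2) : ℝ) : ℂ)
        * f k * g (m - k)‖ ^ 2) :=
    Summable.of_nonneg_of_le (fun m => by positivity) key (hT.mul_left S)
  calc ∑' m : ℤ, ‖∑' k : ℤ,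
      ((((1 + (m : ℝ) ^ 2) ^ ((1 : ℝ) / 2)) ^ ((1 : ℝ) / 2)
        - ((1 + (k : ℝ) ^ 2) ^ ((1 : ℝ) / 2)) ^ ((1 : ℝ) / 2) : ℝ) : ℂ)
        * f k * g (m - k)‖ ^ 2
      ≤ ∑' m, S * T m := Summable.tsum_le_tsum key hLHS (hT.mul_left S)
    _ = S * ∑' m, T m := tsum_mul_left
    _ = S * ((∑' k : ℤ, ‖f k‖^2) * (∑' l : ℤ, V l)) := by rw [hTtot]
    _ = S * (∑' k : ℤ, ‖f k‖ ^ 2)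
        * (∑' l : ℤ, ((1 + (l : ℝ) ^ 2) ^ ((1 + 2 * a) / 2)) * ‖g l‖ ^ 2) := by
        rw [hVdef, mul_assoc]
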